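/- Let F_q be a finite field with q = p^ℓ, p prime. Call a scalar positive if it is a nonzero square, and call a symmetric n×n matrix over F_q positive definite if all its leading principal minors are nonzero squares. Then for any positive c ∈ F_q and 0 ≤ k ≤ ℓ−1, the entrywise map f(x) = c x^{p^k} sends positive definite matrices over F_q to positive definite matrices over F_q. -/
import Mathlib


open Matrix

/-- A scalar in a finite field is *positive* if it is a nonzero square. -/
def FqPos {F : Type*} [Field F] (a : F) : Prop := a ≠ 0 ∧ IsSquare a

/-- A symmetric matrix over a finite field is *positive definite* if all its leading
principal minors are nonzero squares. -/
def FqPosDef {F : Type*} [Field F] {n : ℕ} (A : Matrix (Fin n) (Fin n) F) : Prop :=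
  ∀ (m : ℕ) (h : m ≤ n), 1 ≤ m →
    FqPos ((A.submatrix (Fin.castLE h) (Fin.castLE h)).det)

/-- Over `F_q` with `q = p^ℓ`, the entrywise map `x ↦ c x^{pᵏ}` (with `c` a nonzero
square and `0 ≤ k ≤ ℓ - 1`) sends positive definite matrices to positive definite
matrices. -/
theorem entrywise_frobenius_preserves_posDef
    {p ℓ : ℕ} (hp : p.Prime) (hℓ : 1 ≤ ℓ)
    (F : Type*) [Field F] [Fintype F] (hcard : Fintype.card F = p ^ ℓ)
    (c : F) (hc : FqPos c) (k : ℕ) (hk : k ≤ ℓ - 1)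
    {n : ℕ} (A : Matrix (Fin n) (Fin n) F) (hA : A.IsSymm) (hApd : FqPosDef A) :
    FqPosDef (Matrix.of fun i j => c * A i j ^ p ^ k) := by
  -- Establish `CharP F p`.
  have hpdvd : p ∣ Fintype.card F := hcard ▸ dvd_pow_self p (Nat.one_le_iff_ne_zero.mp hℓ)
  have hchar : ringChar F = p := by
    have h1 : p ∣ ringChar F := haveI := Fact.mk hp; (prime_dvd_char_iff_dvd_card p).mpr hpdvd
    have h2 : (ringChar F).Prime := CharP.char_is_prime F (ringChar F)
    exact ((Nat.prime_dvd_prime_iff_eq hp h2).mp h1).symm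
  haveI : CharP F p := hchar ▸ ringChar.charP F
  haveI : ExpChar F p := ExpChar.prime hp
  -- The Frobenius ring hom.
  set φ : F →+* F := iterateFrobenius F p k with hφ
  have hφdef : ∀ x : F, φ x = x ^ p ^ k := fun x => iterateFrobenius_def p k x
  intro m h hm
  have key : ((Matrix.of fun i j => c * A i j ^ p ^ k).submatrix (Fin.castLE h)
      (Fin.castLE h)).det = c ^ m * φ ((A.submatrix (Fin.castLE h) (Fin.castLE h)).det) := by
    have : ((Matrix.of fun i j => c * A i j ^ p ^ k).submatrix (Fin.castLE h) (Fin.castLE h))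
        = c • ((A.submatrix (Fin.castLE h) (Fin.castLE h)).map φ) := by
      ext i j
      simp [Matrix.smul_apply, hφdef, smul_eq_mul]
    rw [this, Matrix.det_smul, φ.map_det, Fintype.card_fin]
    rw [RingHom.mapMatrix_apply]
  rw [key]
  obtain ⟨hApd0, hApdsq⟩ := hApd m h hm
  constructor
  · refine mul_ne_zero (pow_ne_zero _ hc.1) ?_
    simpa [hφdef] using pow_ne_zero (p ^ k) hApd0
  · exact (hc.2.pow m).mul (by simpa [hφdef] using hApdsq.pow (p ^ k))
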